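/- Let f ∈ K[x_1,...,x_n] be a reduced homogeneous polynomial of degree k > 0 over an algebraically closed field K of characteristic 0, and set f* = Σ_{i=1}^n y_i ∂f/∂x_i ∈ K[x_1,...,x_n,y_1,...,y_n]. Then f* is irreducible, and the product f·f* is reduced (squarefree). -/

import Mathlib

open MvPolynomial

set_option linter.unusedSectionVars false

namespace Stmt6Aux

open Finsupp




lemma degree_add' {σ : Type*} (u v : σ →₀ ℕ) : (u + v).degree = u.degree + v.degree := by
  classical
  exact map_add Finsupp.degree u v

variable {R : Type*} [CommRing R] {σ : Type*}

lemma homogeneousComponent_totalDegree_ne_zero {p : MvPolynomial σ R} (hp : p ≠ 0) :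
    homogeneousComponent p.totalDegree p ≠ 0 := by
  obtain ⟨m, hm, hdeg⟩ := p.support.exists_mem_eq_sup
    (MvPolynomial.support_nonempty.mpr hp) (fun s => s.sum fun _ e => e)
  have hdm : m.degree = p.totalDegree := by
    rw [totalDegree, hdeg]; rfl
  intro h
  have := coeff_homogeneousComponent (n := p.totalDegree) (φ := p) m
  rw [h, if_pos hdm] at this
  exact (MvPolynomial.mem_support_iff.mp hm) this.symm

lemma totalDegree_mul_eq [IsDomain R] {p q : MvPolynomial σ R} (hp : p ≠ 0) (hq : q ≠ 0) :
    (p * q).totalDegree = p.totalDegree + q.totalDegree := by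
  classical
  refine le_antisymm (totalDegree_mul p q) ?_
  set s := p.totalDegree
  set t := q.totalDegree
  set P := homogeneousComponent s p with hP
  set Q := homogeneousComponent t q with hQ
  have hPQ : P * Q ≠ 0 :=
    mul_ne_zero (homogeneousComponent_totalDegree_ne_zero hp)
      (homogeneousComponent_totalDegree_ne_zero hq)
  obtain ⟨d, hd⟩ : ∃ d, coeff d (P * Q) ≠ 0 := by
    by_contra h
    push_neg at h
    exact hPQ (MvPolynomial.ext _ _ (fun d => by simp [h d]))
  have hhom : (P * Q).IsHomogeneous (s + t) :=
    (homogeneousComponent_isHomogeneous s p).mul (homogeneousComponent_isHomogeneous t q)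
  have hdeg : d.degree = s + t := by
    by_contra h
    exact hd (hhom.coeff_eq_zero h)
  have key : coeff d (p * q) = coeff d (P * Q) := by
    rw [coeff_mul, coeff_mul]
    refine Finset.sum_congr rfl (fun uv huv => ?_)
    obtain ⟨u, v⟩ := uv
    have huvd : u + v = d := Finset.HasAntidiagonal.mem_antidiagonal.mp huv
    have hsum : u.degree + v.degree = s + t := by rw [← degree_add', huvd, hdeg]
    have cP : coeff u P = if u.degree = s then coeff u p else 0 := coeff_homogeneousComponent _ _ _
    have cQ : coeff v Q = if v.degree = t then coeff v q else 0 := coeff_homogeneousComponent _ _ _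
    by_cases hu : u.degree = s
    · have hv : v.degree = t := by omega
      rw [cP, cQ, if_pos hu, if_pos hv]
    · rcases lt_or_gt_of_ne hu with hlt | hgt
      · -- u.degree < s, so v.degree > t, coeff v q = 0
        have hv : t < v.degree := by omega
        have : coeff v q = 0 := coeff_eq_zero_of_totalDegree_lt (by
          simpa [Finsupp.degree_apply] using hv)
        rw [cP, cQ, this, if_neg hu, mul_zero, zero_mul]
      · have : coeff u p = 0 := coeff_eq_zero_of_totalDegree_lt (by
          simpa [Finsupp.degree_apply] using hgt)
        rw [cP, cQ, this, if_neg hu, zero_mul, zero_mul]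
  have hmem : d ∈ (p * q).support := mem_support_iff.mpr (by rw [key]; exact hd)
  have := le_totalDegree hmem
  calc s + t = d.degree := hdeg.symm
    _ = d.sum fun _ e => e := rfl
    _ ≤ (p * q).totalDegree := this

lemma totalDegree_le_of_dvd [IsDomain R] {p q : MvPolynomial σ R} (h : p ∣ q) (hq : q ≠ 0) :
    p.totalDegree ≤ q.totalDegree := by
  obtain ⟨c, rfl⟩ := h
  have hp : p ≠ 0 := fun h => hq (by simp [h])
  have hc : c ≠ 0 := fun h => hq (by simp [h])
  rw [totalDegree_mul_eq hp hc]
  omega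

lemma eq_C_of_totalDegree_eq_zero {p : MvPolynomial σ R} (h : p.totalDegree = 0) :
    p = C (coeff 0 p) := by
  classical
  rw [MvPolynomial.totalDegree_eq_zero_iff] at h
  ext d
  rw [coeff_C]
  by_cases hd : d = 0
  · rw [if_pos hd.symm, hd]
  · rw [if_neg (fun h' => hd h'.symm)]
    by_contra hc
    have hd0 : d = 0 := Finsupp.ext (fun i => h d (MvPolynomial.mem_support_iff.mpr hc) i)
    exact hd hd0




variable {R : Type*} [CommRing R] {n : ℕ}

lemma degree_eq_sum_univ (v : Fin n →₀ ℕ) : v.degree = ∑ j : Fin n, v j := by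
  rw [Finsupp.degree]
  exact Finset.sum_subset (Finset.subset_univ _)
    (fun i _ hi => Finsupp.notMem_support_iff.mp hi)

lemma X_mul_pderiv_monomial {i : Fin n} {v : Fin n →₀ ℕ} {a : R} :
    X i * pderiv i (monomial v a) = (v i) • monomial v a := by
  rw [pderiv_monomial, X, monomial_mul, one_mul, smul_monomial]
  by_cases hvi : v i = 0
  · simp [hvi]
  · have hv : Finsupp.single i 1 + (v - Finsupp.single i 1) = v := by
      ext j
      rcases eq_or_ne j i with rfl | hj
      · simp only [Finsupp.add_apply, Finsupp.single_eq_same, Finsupp.tsub_apply]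
        omega
      · simp [Finsupp.single_apply, (Ne.symm hj : i ≠ j), Finsupp.tsub_apply]
    rw [hv]
    congr 1
    rw [nsmul_eq_mul, mul_comm]

theorem euler {f : MvPolynomial (Fin n) R} {k : ℕ} (h : f.IsHomogeneous k) :
    ∑ i : Fin n, X i * pderiv i f = k • f := by
  conv_lhs => rw [f.as_sum]
  conv_rhs => rw [f.as_sum]
  simp only [map_sum, Finset.mul_sum, Finset.smul_sum]
  rw [Finset.sum_comm]
  refine Finset.sum_congr rfl (fun v hv => ?_)
  have hdeg : v.degree = k := by
    rw [Finsupp.degree_eq_weight_one]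
    exact h (MvPolynomial.mem_support_iff.mp hv)
  calc ∑ i : Fin n, X i * pderiv i (monomial v (coeff v f))
      = ∑ i : Fin n, (v i) • monomial v (coeff v f) := by
        exact Finset.sum_congr rfl (fun i _ => X_mul_pderiv_monomial)
    _ = (∑ i : Fin n, v i) • monomial v (coeff v f) := by rw [Finset.sum_smul]
    _ = k • monomial v (coeff v f) := by rw [← degree_eq_sum_univ, hdeg]

lemma pderiv_as_sum (p : MvPolynomial (Fin n) R) (i : Fin n) :
    pderiv i p = ∑ v ∈ p.support, monomial (v - Finsupp.single i 1) (coeff v p * v i) := by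
  conv_lhs => rw [p.as_sum]
  rw [map_sum]
  simp only [pderiv_monomial]

lemma coeff_pderiv_sub {p : MvPolynomial (Fin n) R} {i : Fin n} {d : Fin n →₀ ℕ} (hdi : d i ≠ 0)
    (hd : coeff (d - Finsupp.single i 1) (pderiv i p) = 0) :
    coeff d p * (d i : R) = 0 := by
  classical
  rw [pderiv_as_sum, MvPolynomial.coeff_sum] at hd
  by_cases hmem : d ∈ p.support
  · rw [Finset.sum_eq_single_of_mem d hmem] at hd
    · rwa [coeff_monomial, if_pos rfl] at hd
    · intro v hv hvd
      rw [coeff_monomial]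
      by_cases hcond : v - Finsupp.single i 1 = d - Finsupp.single i 1
      · rw [if_pos hcond]
        by_cases hvi : v i = 0
        · simp [hvi]
        · exfalso
          apply hvd
          ext j
          have := DFunLike.congr_fun hcond j
          rw [Finsupp.tsub_apply, Finsupp.tsub_apply] at this
          rcases eq_or_ne i j with rfl | hij
          · rw [Finsupp.single_eq_same] at this
            omega
          · rw [Finsupp.single_eq_of_ne' hij] at this
            omega
      · rw [if_neg hcond]
  · rw [MvPolynomial.notMem_support_iff.mp hmem, zero_mul]

lemma eq_C_of_pderiv_eq_zero [NoZeroDivisors R] [CharZero R]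
    {p : MvPolynomial (Fin n) R} (h : ∀ i, pderiv i p = 0) :
    p = C (coeff 0 p) := by
  classical
  have key : ∀ d : Fin n →₀ ℕ, d ≠ 0 → coeff d p = 0 := by
    intro d hd
    obtain ⟨i, hi⟩ : ∃ i, d i ≠ 0 := by
      by_contra hc
      push_neg at hc
      exact hd (Finsupp.ext hc)
    have h0 : coeff (d - Finsupp.single i 1) (pderiv i p) = 0 := by rw [h i]; rfl
    have := coeff_pderiv_sub hi h0
    rcases mul_eq_zero.mp this with h' | h'
    · exact h'
    · exact absurd (Nat.cast_eq_zero.mp h') hi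
  ext d
  rw [coeff_C]
  by_cases hd : d = 0
  · rw [if_pos hd.symm, hd]
  · rw [if_neg (fun h' => hd h'.symm), key d hd]

lemma exists_of_mem_support_pderiv {p : MvPolynomial (Fin n) R} {i : Fin n} {d : Fin n →₀ ℕ}
    (hd : d ∈ (pderiv i p).support) :
    ∃ v ∈ p.support, v i ≠ 0 ∧ d = v - Finsupp.single i 1 := by
  classical
  have hcd : coeff d (pderiv i p) ≠ 0 := MvPolynomial.mem_support_iff.mp hd
  rw [pderiv_as_sum, MvPolynomial.coeff_sum] at hcd
  obtain ⟨v, hv, hne⟩ := Finset.exists_ne_zero_of_sum_ne_zero hcd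
  rw [coeff_monomial] at hne
  by_cases hcond : v - Finsupp.single i 1 = d
  · refine ⟨v, hv, ?_, hcond.symm⟩
    intro hvi
    rw [if_pos hcond, hvi] at hne
    simp at hne
  · rw [if_neg hcond] at hne
    exact absurd rfl hne

lemma degree_sub_single_lt {v : Fin n →₀ ℕ} {i : Fin n} (hvi : v i ≠ 0) :
    (v - Finsupp.single i 1).degree < v.degree := by
  rw [degree_eq_sum_univ, degree_eq_sum_univ]
  refine Finset.sum_lt_sum (fun j _ => ?_) ⟨i, Finset.mem_univ i, ?_⟩
  · rw [Finsupp.tsub_apply]; omega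
  · rw [Finsupp.tsub_apply, Finsupp.single_eq_same]; omega

lemma totalDegree_pderiv_lt {p : MvPolynomial (Fin n) R} {i : Fin n}
    (h : pderiv i p ≠ 0) : (pderiv i p).totalDegree < p.totalDegree := by
  classical
  have hbound : ∀ d ∈ (pderiv i p).support, (d.sum fun _ e => e) < p.totalDegree := by
    intro d hd
    obtain ⟨v, hv, hvi, rfl⟩ := exists_of_mem_support_pderiv hd
    have h1 : (v - Finsupp.single i 1).degree < v.degree := degree_sub_single_lt hvi
    have h2 : v.degree ≤ p.totalDegree := le_totalDegree hv
    calc ((v - Finsupp.single i 1).sum fun _ e => e) = (v - Finsupp.single i 1).degree := rfl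
      _ < v.degree := h1
      _ ≤ p.totalDegree := h2
  obtain ⟨d0, hd0⟩ := MvPolynomial.support_nonempty.mpr h
  have hpos : 0 < p.totalDegree := lt_of_le_of_lt (Nat.zero_le _) (hbound d0 hd0)
  rw [totalDegree]
  exact Finset.sup_lt_iff hpos |>.mpr hbound




variable {K : Type*} [Field K] [CharZero K] {n k : ℕ}

omit [CharZero K] in
lemma smul_eq_C_mul' (f : MvPolynomial (Fin n) K) (k : ℕ) : k • f = C (k : K) * f := by
  rw [nsmul_eq_mul]
  norm_cast

lemma dvd_f_of_dvd_pderiv {f : MvPolynomial (Fin n) K} (hk : 0 < k)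
    (hhom : f.IsHomogeneous k) {r : MvPolynomial (Fin n) K}
    (hr : ∀ i, r ∣ pderiv i f) : r ∣ f := by
  have hE := euler hhom
  have h1 : r ∣ k • f := by
    rw [← hE]
    exact Finset.dvd_sum (fun i _ => Dvd.dvd.mul_left (hr i) _)
  rw [smul_eq_C_mul'] at h1
  have hu : IsUnit (C (k : K) : MvPolynomial (Fin n) K) :=
    IsUnit.map (C : K →+* MvPolynomial (Fin n) K)
      (isUnit_iff_ne_zero.mpr (Nat.cast_ne_zero.mpr hk.ne'))
  exact (hu.dvd_mul_left).mp h1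

lemma key_no_common_factor {f : MvPolynomial (Fin n) K} (hk : 0 < k)
    (hhom : f.IsHomogeneous k) (hred : Squarefree f)
    {r : MvPolynomial (Fin n) K} (hr : ∀ i, r ∣ pderiv i f) : IsUnit r := by
  by_contra hru
  have hf0 : f ≠ 0 := hred.ne_zero
  have hr0 : r ≠ 0 := by
    rintro rfl
    have hz : ∀ i, pderiv i f = 0 := fun i => zero_dvd_iff.mp (hr i)
    have hE := euler hhom
    rw [Finset.sum_eq_zero (fun i _ => by rw [hz i, mul_zero])] at hE
    rw [smul_eq_C_mul'] at hE
    have : (C (k : K) : MvPolynomial (Fin n) K) ≠ 0 := by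
      simp [Nat.cast_ne_zero.mpr hk.ne']
    exact hf0 (by
      rcases mul_eq_zero.mp hE.symm with h | h
      · exact absurd h this
      · exact h)
  obtain ⟨p, hpirr, hpr⟩ := WfDvdMonoid.exists_irreducible_factor hru hr0
  have hpprime : Prime p := (UniqueFactorizationMonoid.irreducible_iff_prime).mp hpirr
  have hpd : ∀ i, p ∣ pderiv i f := fun i => hpr.trans (hr i)
  have hpf : p ∣ f := dvd_f_of_dvd_pderiv hk hhom hpd
  obtain ⟨q, hq⟩ := hpf
  have hpq : ¬ p ∣ q := by
    intro hdvd
    refine hpirr.not_isUnit (hred p ?_)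
    rw [hq]
    exact mul_dvd_mul hdvd (dvd_refl p) |>.trans (by rw [mul_comm])
  -- p divides pderiv i p * q for each i, p prime, p ∤ q, so p ∣ pderiv i p, so pderiv i p = 0
  have hz : ∀ i, pderiv i p = 0 := by
    intro i
    have hd1 : p ∣ pderiv i p * q := by
      have : pderiv i f = pderiv i p * q + p * pderiv i q := by
        rw [hq, pderiv_mul]
      have h2 := hpd i
      rw [this] at h2
      have h3 : p ∣ p * pderiv i q := Dvd.intro _ rfl
      have h4 : pderiv i p * q = (pderiv i p * q + p * pderiv i q) - p * pderiv i q := by ring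
      rw [h4]
      exact dvd_sub h2 h3
    rcases hpprime.dvd_mul.mp hd1 with h | h
    · by_contra hne
      have hlt := totalDegree_pderiv_lt (p := p) (i := i) hne
      have hle := totalDegree_le_of_dvd h hne
      omega
    · exact absurd h hpq
  -- so p is a constant, contradicting irreducibility
  have hC := eq_C_of_pderiv_eq_zero hz
  have hc0 : coeff 0 p ≠ 0 := by
    intro h0
    rw [h0, map_zero] at hC
    exact hpirr.ne_zero hC
  exact hpirr.not_isUnit (hC ▸ IsUnit.map (C : K →+* MvPolynomial (Fin n) K)
    (isUnit_iff_ne_zero.mpr hc0))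




lemma squarefree_comap {M N : Type*} [CommMonoid M] [CommMonoid N] (e : M ≃* N) {a : M}
    (h : Squarefree (e a)) : Squarefree a := by
  intro x hx
  have hx' : e x * e x ∣ e a := by
    rw [← map_mul]; exact map_dvd e hx
  have h1 := h (e x) hx'
  have h2 := h1.map e.symm.toMonoidHom
  simpa using h2



end Stmt6Aux

/-- The map `f ↦ f* = ∑ i, y_i ∂f/∂x_i`, from `K[x]` to `K[x,y]`. -/
noncomputable def star {K : Type*} [CommRing K] {n : ℕ}
    (f : MvPolynomial (Fin n) K) : MvPolynomial (Fin n ⊕ Fin n) K :=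
  ∑ i : Fin n, X (Sum.inr i) * rename Sum.inl (pderiv i f)

namespace Stmt6Aux

open Finsupp

section Main

variable {K : Type*} [Field K] [CharZero K] {n k : ℕ}

/-- The equivalence K[x,y] ≃ (K[x])[y]. -/
noncomputable def e (K : Type*) [CommSemiring K] (n : ℕ) :
    MvPolynomial (Fin n ⊕ Fin n) K ≃ₐ[K] MvPolynomial (Fin n) (MvPolynomial (Fin n) K) :=
  (renameEquiv K (Equiv.sumComm (Fin n) (Fin n))).trans (sumAlgEquiv K (Fin n) (Fin n))

lemma e_rename_inl (g : MvPolynomial (Fin n) K) : e K n (rename Sum.inl g) = C g := by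
  show (sumAlgEquiv K (Fin n) (Fin n))
    ((rename (Equiv.sumComm (Fin n) (Fin n))) ((rename Sum.inl) g)) = C g
  rw [rename_rename]
  have h1 : (⇑(Equiv.sumComm (Fin n) (Fin n)) ∘ Sum.inl) = (Sum.inr : Fin n → Fin n ⊕ Fin n) :=
    rfl
  rw [h1]
  have := DFunLike.congr_fun (sumAlgEquiv_comp_rename_inr K (Fin n) (Fin n)) g
  simpa using this

lemma e_X_inr (i : Fin n) : e K n (X (Sum.inr i)) = X i := by
  show (sumAlgEquiv K (Fin n) (Fin n))
    ((rename (Equiv.sumComm (Fin n) (Fin n))) (X (Sum.inr i))) = X i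
  rw [rename_X]
  show sumAlgEquiv K (Fin n) (Fin n) (X (Sum.inl i)) = X i
  exact sumAlgEquiv_X_inl _ _ _ i

lemma e_star (f : MvPolynomial (Fin n) K) :
    e K n (star f) = ∑ i : Fin n, C (pderiv i f) * X i := by
  show e K n (∑ i : Fin n, X (Sum.inr i) * rename Sum.inl (pderiv i f))
      = ∑ i : Fin n, C (pderiv i f) * X i
  rw [map_sum]
  refine Finset.sum_congr rfl (fun i _ => ?_)
  rw [map_mul, e_X_inr, e_rename_inl, mul_comm]

omit [CharZero K] in
lemma coeff_single_L (g : Fin n → MvPolynomial (Fin n) K) (i : Fin n) :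
    coeff (Finsupp.single i 1) (∑ j : Fin n, C (g j) * X j) = g i := by
  classical
  rw [MvPolynomial.coeff_sum]
  rw [Finset.sum_eq_single_of_mem i (Finset.mem_univ i)]
  · rw [C_mul_X_eq_monomial, coeff_monomial, if_pos rfl]
  · intro j _ hji
    rw [C_mul_X_eq_monomial, coeff_monomial, if_neg]
    intro hc
    exact hji (Finsupp.single_left_injective one_ne_zero hc)

set_option synthInstance.maxHeartbeats 1000000 in
theorem stmt_main {K : Type*} [Field K] [CharZero K] {n k : ℕ}
    (f : MvPolynomial (Fin n) K) (hk : 0 < k)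
    (hhom : f.IsHomogeneous k) (hred : Squarefree f) :
    Irreducible (star f) ∧ Squarefree (rename Sum.inl f * star f) := by
  classical
  set L : MvPolynomial (Fin n) (MvPolynomial (Fin n) K) :=
    ∑ i : Fin n, C (pderiv i f) * X i with hLdef
  have hf0 : f ≠ 0 := hred.ne_zero
  have hsmul : ∀ g : MvPolynomial (Fin n) K, k • g = C (k : K) * g := by
    intro g; rw [nsmul_eq_mul]; norm_cast
  have hCk : (C (k : K) : MvPolynomial (Fin n) K) ≠ 0 := by
    simp [Nat.cast_ne_zero.mpr hk.ne']
  have hcoeffL : ∀ i, coeff (Finsupp.single i 1) L = pderiv i f :=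
    fun i => coeff_single_L (fun j => pderiv j f) i
  have hex : ∃ i, pderiv i f ≠ 0 := by
    by_contra h
    push_neg at h
    have hE := euler hhom
    rw [Finset.sum_eq_zero (fun i _ => by rw [h i, mul_zero]), hsmul] at hE
    rcases mul_eq_zero.mp hE.symm with h' | h'
    · exact hCk h'
    · exact hf0 h'
  have hL0 : L ≠ 0 := by
    intro h
    obtain ⟨i, hi⟩ := hex
    apply hi
    rw [← hcoeffL i, h, MvPolynomial.coeff_zero]
  have hLhom : L.IsHomogeneous 1 :=
    IsHomogeneous.sum _ _ _ (fun i _ => isHomogeneous_C_mul_X _ i)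
  have hLdeg : L.totalDegree = 1 := hLhom.totalDegree hL0
  have hCf0 : (C f : MvPolynomial (Fin n) (MvPolynomial (Fin n) K)) ≠ 0 := by
    simpa using hf0
  have hCfdeg : (C f : MvPolynomial (Fin n) (MvPolynomial (Fin n) K)).totalDegree = 0 :=
    totalDegree_C f
  -- any constant divisor of L is a unit
  have hkey : ∀ r : MvPolynomial (Fin n) K,
      (C r : MvPolynomial (Fin n) (MvPolynomial (Fin n) K)) ∣ L → IsUnit r := by
    intro r hr
    refine key_no_common_factor hk hhom hred (fun i => ?_)
    have := (C_dvd_iff_dvd_coeff r L).mp hr (Finsupp.single i 1)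
    rwa [hcoeffL i] at this
  have hdeg0 : ∀ a : MvPolynomial (Fin n) (MvPolynomial (Fin n) K),
      a.totalDegree = 0 → a ∣ L → IsUnit a := by
    intro a hdeg ha
    have ha' := eq_C_of_totalDegree_eq_zero hdeg
    have hu : IsUnit (coeff 0 a) := by
      apply hkey
      rw [← ha']
      exact ha
    rw [ha']
    exact hu.map (C : MvPolynomial (Fin n) K →+* _)
  have hLirr : Irreducible L := by
    constructor
    · intro hu
      have h1 : L ∣ 1 := hu.dvd
      have := totalDegree_le_of_dvd h1 one_ne_zero
      rw [hLdeg, MvPolynomial.totalDegree_one] at this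
      omega
    · intro a b hab
      have ha0 : a ≠ 0 := by rintro rfl; rw [zero_mul] at hab; exact hL0 hab
      have hb0 : b ≠ 0 := by rintro rfl; rw [mul_zero] at hab; exact hL0 hab
      have hsum : a.totalDegree + b.totalDegree = 1 := by
        rw [← totalDegree_mul_eq ha0 hb0, ← hab, hLdeg]
      rcases (by omega : a.totalDegree = 0 ∨ b.totalDegree = 0) with h | h
      · exact Or.inl (hdeg0 a h ⟨b, hab⟩)
      · exact Or.inr (hdeg0 b h ⟨a, by rw [hab, mul_comm]⟩)
  have hsqCf : Squarefree (C f : MvPolynomial (Fin n) (MvPolynomial (Fin n) K)) := by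
    intro a ha
    have hadvd : a ∣ C f := (dvd_mul_right a a).trans ha
    have hdeg : a.totalDegree = 0 :=
      Nat.le_zero.mp (hCfdeg ▸ totalDegree_le_of_dvd hadvd hCf0)
    have ha' := eq_C_of_totalDegree_eq_zero hdeg
    rw [ha'] at ha
    rw [← map_mul] at ha
    have hrr : coeff 0 a * coeff 0 a ∣ f := by
      have := (C_dvd_iff_dvd_coeff _ (C f)).mp ha 0
      rwa [coeff_zero_C] at this
    rw [ha']
    exact (hred _ hrr).map (C : MvPolynomial (Fin n) K →+* _)
  have hrel : IsRelPrime (C f : MvPolynomial (Fin n) (MvPolynomial (Fin n) K)) L := by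
    intro d hd1 hd2
    have hdeg : d.totalDegree = 0 :=
      Nat.le_zero.mp (hCfdeg ▸ totalDegree_le_of_dvd hd1 hCf0)
    exact hdeg0 d hdeg hd2
  have hsqprod : Squarefree ((C f : MvPolynomial (Fin n) (MvPolynomial (Fin n) K)) * L) :=
    squarefree_mul_iff.mpr ⟨hrel, hsqCf, hLirr.squarefree⟩
  have hE1 : e K n (star f) = L := e_star f
  have hE2 : e K n (rename Sum.inl f * star f) = C f * L := by
    rw [map_mul, e_rename_inl, hE1]
  constructor
  · exact (MulEquiv.irreducible_iff (e K n).toMulEquiv).mp (by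
      show Irreducible (e K n (star f))
      rw [hE1]; exact hLirr)
  · exact squarefree_comap (e K n).toMulEquiv (by
      show Squarefree (e K n (rename Sum.inl f * star f))
      rw [hE2]; exact hsqprod)

end Main

end Stmt6Aux

/-- for `f` reduced homogeneous of degree `k > 0` over an
algebraically closed field of characteristic zero, `f*` is irreducible and
`f · f*` is reduced (squarefree). -/
theorem stmt_6 {K : Type*} [Field K] [IsAlgClosed K] [CharZero K] {n k : ℕ}
    (f : MvPolynomial (Fin n) K) (hk : 0 < k)
    (hhom : f.IsHomogeneous k) (hred : Squarefree f) :
    Irreducible (star f) ∧ Squarefree (rename Sum.inl f * star f) :=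
  Stmt6Aux.stmt_main f hk hhom hred
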